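/- (Birch's theorem) Let n be a positive integer, let V ⊆ ℝⁿ be a linear subspace, and let x₀, Γ ∈ ℝⁿ with x₀ᵢ > 0 and Γᵢ > 0 for all i. Then there exists a unique x ∈ ℝⁿ with xᵢ > 0 for all i such that x − x₀ ∈ V and the vector (log(xᵢ/Γᵢ))ᵢ lies in V^⊥. Equivalently, the toric model {x : xᵢ = Γᵢ e^{(u)ᵢ}, u ∈ V^⊥} intersects the affine subspace x₀ + V in exactly one point of the positive orthant. -/

import Mathlib

open Real Filter

/-- Per-coordinate coercivity bound for `t ↦ a * exp t - b * t`. -/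
lemma birch_percoord {a b c C t : ℝ} (ha : 0 < a) (hb : 0 < b) (hc : 0 < c)
    (hcb : c ≤ b) (hC : (b + c)^2 ≤ C * a) :
    c * |t| - C ≤ a * Real.exp t - b * t := by
  have hC0 : 0 < C := by nlinarith [sq_nonneg (b + c)]
  rcases le_or_gt t 0 with ht | ht
  · rw [abs_of_nonpos ht]
    nlinarith [Real.exp_pos t, mul_nonneg (sub_nonneg.2 hcb) (neg_nonneg.2 ht)]
  · rw [abs_of_pos ht]
    have h1 : 1 + t/2 ≤ Real.exp (t/2) := by
      have := Real.add_one_le_exp (t/2); linarith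
    have h2 : Real.exp (t/2) * Real.exp (t/2) = Real.exp t := by
      rw [← Real.exp_add]; ring_nf
    have h3 : (1 + t/2) * (1 + t/2) ≤ Real.exp t := by
      rw [← h2]
      exact mul_le_mul h1 h1 (by linarith) (Real.exp_pos _).le
    have h4 : a * ((1 + t/2) * (1 + t/2)) ≤ a * Real.exp t :=
      mul_le_mul_of_nonneg_left h3 ha.le
    nlinarith [sq_nonneg (a * t - 2 * (b + c)), mul_pos ha ht]

/-- Existence part of Birch's theorem: minimizing `u ↦ ∑ᵢ Γᵢ exp uᵢ - x₀ᵢ uᵢ` over a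
subspace `W` produces `u ∈ W` whose gradient `Γ e^u - x₀` is orthogonal to `W`. -/
lemma birch_exists {n : ℕ} (hn : 0 < n) (W : Submodule ℝ (EuclideanSpace ℝ (Fin n)))
    (x₀ Γ : Fin n → ℝ) (hx₀ : ∀ i, 0 < x₀ i) (hΓ : ∀ i, 0 < Γ i) :
    ∃ u ∈ W, ∀ w ∈ W, ∑ i, (Γ i * Real.exp (u i) - x₀ i) * w i = 0 := by
  have : Nonempty (Fin n) := ⟨⟨0, hn⟩⟩
  have hne : (Finset.univ : Finset (Fin n)).Nonempty := Finset.univ_nonempty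
  set F : EuclideanSpace ℝ (Fin n) → ℝ :=
    fun v => ∑ i, (Γ i * Real.exp (v i) - x₀ i * v i) with hF
  have hFc : Continuous F := by
    apply continuous_finset_sum
    intro i _
    exact (continuous_const.mul (Real.continuous_exp.comp
      (EuclideanSpace.proj i).continuous)).sub
      (continuous_const.mul (EuclideanSpace.proj i).continuous)
  -- constants for the coercivity bound
  set c : ℝ := Finset.univ.inf' hne x₀ with hcdef
  have hc_pos : 0 < c := by
    rw [hcdef, Finset.lt_inf'_iff]
    exact fun i _ => hx₀ i
  have hc_le : ∀ i, c ≤ x₀ i := fun i => Finset.inf'_le _ (Finset.mem_univ i)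
  set C : ℝ := Finset.univ.sup' hne (fun i => (x₀ i + c)^2 / Γ i) with hCdef
  have hC : ∀ i, (x₀ i + c)^2 ≤ C * Γ i := by
    intro i
    have h := Finset.le_sup' (fun i => (x₀ i + c)^2 / Γ i) (Finset.mem_univ i)
    rw [div_le_iff₀ (hΓ i)] at h
    exact h
  -- coercivity of F
  have key : ∀ v : EuclideanSpace ℝ (Fin n), c * ‖v‖ - n * C ≤ F v := by
    intro v
    have h1 : ∀ i ∈ Finset.univ, c * |v i| - C ≤ Γ i * Real.exp (v i) - x₀ i * v i :=
      fun i _ => birch_percoord (hΓ i) (hx₀ i) hc_pos (hc_le i) (hC i)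
    have h2 : ‖v‖ ≤ ∑ i, |v i| := by
      rw [EuclideanSpace.norm_eq]
      have hsq := Finset.sum_sq_le_sq_sum_of_nonneg
        (f := fun i => |v i|) (s := Finset.univ) (fun i _ => abs_nonneg _)
      calc √(∑ i, ‖v i‖^2) ≤ √((∑ i, |v i|)^2) := by
            apply Real.sqrt_le_sqrt
            simpa [Real.norm_eq_abs] using hsq
        _ = ∑ i, |v i| := Real.sqrt_sq (Finset.sum_nonneg fun i _ => abs_nonneg _)
    calc c * ‖v‖ - n * C ≤ c * (∑ i, |v i|) - n * C := by
          have := mul_le_mul_of_nonneg_left h2 hc_pos.le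
          linarith
      _ = ∑ i, (c * |v i| - C) := by
          rw [Finset.sum_sub_distrib, ← Finset.mul_sum]
          simp [Finset.card_univ]
      _ ≤ F v := Finset.sum_le_sum h1
  -- minimize F over W
  have : Nonempty W := ⟨0⟩
  obtain ⟨u, hu⟩ : ∃ u : W, ∀ y : W, F u ≤ F y := by
    apply (hFc.comp continuous_subtype_val).exists_forall_le
    apply tendsto_atTop_mono (fun y : W => key (y : EuclideanSpace ℝ (Fin n)))
    have h1 : Tendsto (fun y : W => ‖(y : EuclideanSpace ℝ (Fin n))‖) (cocompact W) atTop :=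
      tendsto_norm_cocompact_atTop (E := W)
    have h2 := tendsto_atTop_add_const_right (cocompact W) (-(n * C))
      (h1.const_mul_atTop hc_pos)
    simpa [sub_eq_add_neg] using h2
  -- first-order optimality condition
  refine ⟨u, u.2, ?_⟩
  intro w hw
  set uv : EuclideanSpace ℝ (Fin n) := (u : EuclideanSpace ℝ (Fin n)) with huv
  set g : ℝ → ℝ :=
    fun t => ∑ i, (Γ i * Real.exp (uv i + t * w i) - x₀ i * (uv i + t * w i)) with hg
  have hgF : ∀ t, g t = F (uv + t • w) := by
    intro t
    simp [hg, hF, PiLp.add_apply, PiLp.smul_apply, smul_eq_mul]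
  have hmin : IsLocalMin g 0 := by
    apply Filter.Eventually.of_forall
    intro t
    rw [hgF, hgF]
    simp only [zero_smul, add_zero]
    exact hu ⟨uv + t • w, W.add_mem u.2 (W.smul_mem t hw)⟩
  have hder : HasDerivAt g (∑ i, (Γ i * Real.exp (uv i) - x₀ i) * w i) 0 := by
    have h : ∀ i ∈ Finset.univ, HasDerivAt
        (fun t => Γ i * Real.exp (uv i + t * w i) - x₀ i * (uv i + t * w i))
        ((Γ i * Real.exp (uv i) - x₀ i) * w i) 0 := by
      intro i _
      have hlin : HasDerivAt (fun t : ℝ => uv i + t * w i) (w i) 0 := by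
        simpa using (((hasDerivAt_id (0:ℝ)).mul_const (w i)).const_add (uv i))
      have he := hlin.exp
      have := (he.const_mul (Γ i)).fun_sub (hlin.const_mul (x₀ i))
      refine this.congr_deriv ?_
      simp
      ring
    exact HasDerivAt.fun_sum h
  have h0 := hmin.deriv_eq_zero
  rw [hder.deriv] at h0
  exact h0

/-- Uniqueness part of Birch's theorem. -/
lemma birch_unique {n : ℕ} (V : Submodule ℝ (Fin n → ℝ)) (x₀ Γ : Fin n → ℝ)
    (hΓ : ∀ i, 0 < Γ i) (x y : Fin n → ℝ)
    (hx : (∀ i, 0 < x i) ∧ x - x₀ ∈ V ∧ ∀ v ∈ V, ∑ i, Real.log (x i / Γ i) * v i = 0)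
    (hy : (∀ i, 0 < y i) ∧ y - x₀ ∈ V ∧ ∀ v ∈ V, ∑ i, Real.log (y i / Γ i) * v i = 0) :
    x = y := by
  obtain ⟨hxp, hxV, hxo⟩ := hx
  obtain ⟨hyp, hyV, hyo⟩ := hy
  have hd : x - y ∈ V := by
    have := V.sub_mem hxV hyV
    have e : x - x₀ - (y - x₀) = x - y := by abel
    rwa [e] at this
  have h1 := hxo _ hd
  have h2 := hyo _ hd
  have h3 : ∑ i, (Real.log (x i) - Real.log (y i)) * (x i - y i) = 0 := by
    have hlog : ∀ i, Real.log (x i / Γ i) - Real.log (y i / Γ i)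
        = Real.log (x i) - Real.log (y i) := by
      intro i
      rw [Real.log_div (hxp i).ne' (hΓ i).ne', Real.log_div (hyp i).ne' (hΓ i).ne']
      ring
    calc ∑ i, (Real.log (x i) - Real.log (y i)) * (x i - y i)
        = ∑ i, (Real.log (x i / Γ i) * (x - y) i - Real.log (y i / Γ i) * (x - y) i) := by
          refine Finset.sum_congr rfl fun i _ => ?_
          rw [← hlog i, Pi.sub_apply]; ring
      _ = 0 := by rw [Finset.sum_sub_distrib, h1, h2, sub_zero]
  have hnn : ∀ i ∈ Finset.univ, 0 ≤ (Real.log (x i) - Real.log (y i)) * (x i - y i) := by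
    intro i _
    rcases le_total (x i) (y i) with h | h
    · have hl : Real.log (x i) ≤ Real.log (y i) := Real.log_le_log (hxp i) h
      nlinarith
    · have hl : Real.log (y i) ≤ Real.log (x i) := Real.log_le_log (hyp i) h
      nlinarith
  have hz := (Finset.sum_eq_zero_iff_of_nonneg hnn).mp h3
  funext i
  have hi := hz i (Finset.mem_univ i)
  by_contra hne
  rcases lt_or_gt_of_ne hne with h | h
  · have := Real.log_lt_log (hxp i) h
    nlinarith
  · have := Real.log_lt_log (hyp i) h
    nlinarith

/-- **Birch's theorem.**
For a linear subspace `V ⊆ ℝⁿ` and positive vectors `x₀, Γ`, there is a unique positive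
vector `x` with `x - x₀ ∈ V` such that the vector `(log (xᵢ / Γᵢ))ᵢ` is orthogonal to `V`
(i.e. lies in `Vᗮ`); equivalently, the toric model `{x : xᵢ = Γᵢ e^{uᵢ}, u ∈ Vᗮ}`
intersects the affine subspace `x₀ + V` in exactly one point of the positive orthant. -/
theorem birch_theorem
    {n : ℕ} (hn : 0 < n) (V : Submodule ℝ (Fin n → ℝ)) (x₀ Γ : Fin n → ℝ)
    (hx₀ : ∀ i, 0 < x₀ i) (hΓ : ∀ i, 0 < Γ i) :
    ∃! x : Fin n → ℝ, (∀ i, 0 < x i) ∧ x - x₀ ∈ V ∧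
      ∀ v ∈ V, ∑ i, Real.log (x i / Γ i) * v i = 0 := by
  let V' : Submodule ℝ (EuclideanSpace ℝ (Fin n)) :=
    V.comap (WithLp.linearEquiv 2 ℝ (Fin n → ℝ)).toLinearMap
  obtain ⟨u, huW, hu⟩ := birch_exists hn V'ᗮ x₀ Γ hx₀ hΓ
  have hprop : (∀ i, 0 < Γ i * Real.exp (u i)) ∧
      (fun i => Γ i * Real.exp (u i)) - x₀ ∈ V ∧
      ∀ v ∈ V, ∑ i, Real.log (Γ i * Real.exp (u i) / Γ i) * v i = 0 := by
    refine ⟨fun i => mul_pos (hΓ i) (Real.exp_pos _), ?_, ?_⟩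
    · -- the gradient lies in V'ᗮᗮ = V'
      let z : EuclideanSpace ℝ (Fin n) := WithLp.toLp 2 fun i => Γ i * Real.exp (u i) - x₀ i
      have hy : z ∈ V'ᗮᗮ := by
        rw [Submodule.mem_orthogonal]
        intro w hw
        have := hu w hw
        simpa [z, PiLp.inner_apply, RCLike.inner_apply, conj_trivial, mul_comm] using this
      rw [Submodule.orthogonal_orthogonal] at hy
      have e : ((fun i => Γ i * Real.exp (u i)) - x₀ : Fin n → ℝ)
          = fun i => Γ i * Real.exp (u i) - x₀ i := by
        funext i; simp [Pi.sub_apply]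
      rw [e]
      exact hy
    · intro v hv
      have h := (Submodule.mem_orthogonal _ _).mp huW (WithLp.toLp 2 v) hv
      simp only [PiLp.inner_apply, RCLike.inner_apply, conj_trivial, PiLp.toLp_apply] at h
      calc ∑ i, Real.log (Γ i * Real.exp (u i) / Γ i) * v i = ∑ i, u i * v i := by
            refine Finset.sum_congr rfl fun i _ => ?_
            rw [mul_div_cancel_left₀ _ (hΓ i).ne', Real.log_exp]
        _ = 0 := by
            rw [← h]
  exact ⟨fun i => Γ i * Real.exp (u i), hprop,
    fun y hy => birch_unique V x₀ Γ hΓ y (fun i => Γ i * Real.exp (u i)) hy hprop⟩
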